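/- Let H and K be groups with central subgroups A ≤ Z(H) and B ≤ Z(K), and let φ : A → B be an isomorphism. Suppose A is p-separable in H, B is p-separable in K, and every finite p-power-index subgroup of A (resp. B) is p-separable in H (resp. K). Then for all normal subgroups M ⊴ H and N ⊴ K of finite p-power index, there exist (A,B,φ)-compatible normal subgroups R ⊴ H and S ⊴ K of finite p-power index with R ≤ M and S ≤ N. -/

import Mathlib

/-- A subset `M` of a group `G` is `p`-separable if every `a ∈ G` with `a ∉ M` can be
separated from `M` by a homomorphism of `G` onto a finite `p`-group. -/
def PSep (p : ℕ) {G : Type} [Group G] (M : Set G) : Prop :=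
  ∀ a : G, a ∉ M →
    ∃ (X : Type) (_ : Group X), Finite X ∧ IsPGroup p X ∧
      ∃ φ : G →* X, Function.Surjective φ ∧ φ a ∉ φ '' M

/-- Normal subgroups `R ⊴ H` and `S ⊴ K` are `(A,B,φ)`-compatible if `φ` maps `A ∩ R`
onto `B ∩ S`. -/
def Compatible {H K : Type} [Group H] [Group K] (A : Subgroup H) (B : Subgroup K)
    (φ : A ≃* B) (R : Subgroup H) (S : Subgroup K) : Prop :=
  (fun a : A => (φ a : K)) '' {a : A | (a : H) ∈ R} = ↑(B ⊓ S)

section Aux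

open Pointwise

variable {p : ℕ} {G : Type} [Group G]

lemma pPow_of_dvd_pPow (hp : p.Prime) {a : ℕ} {n : ℕ} (h : a ∣ p ^ n) : ∃ m, a = p ^ m := by
  obtain ⟨m, -, hm⟩ := (Nat.dvd_prime_pow hp).mp h
  exact ⟨m, hm⟩

lemma pPow_index_of_le (hp : p.Prime) {R₁ R₂ : Subgroup G} (h : R₁ ≤ R₂)
    (h₁ : ∃ n, R₁.index = p ^ n) : ∃ n, R₂.index = p ^ n := by
  obtain ⟨n, hn⟩ := h₁
  exact pPow_of_dvd_pPow hp (hn ▸ Subgroup.index_dvd_of_le h)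

lemma pPow_index_inf (hp : p.Prime) {K₁ K₂ : Subgroup G} [K₁.Normal]
    (h₁ : ∃ n, K₁.index = p ^ n) (h₂ : ∃ n, K₂.index = p ^ n) :
    ∃ n, (K₁ ⊓ K₂).index = p ^ n := by
  obtain ⟨n₁, hn₁⟩ := h₁
  obtain ⟨n₂, hn₂⟩ := h₂
  have hdvd : (K₁ ⊓ K₂).index ∣ K₁.index * K₂.index := by
    rw [← Subgroup.relIndex_mul_index (inf_le_right : K₁ ⊓ K₂ ≤ K₂),
      Subgroup.inf_relIndex_right]
    exact mul_dvd_mul (Subgroup.relIndex_dvd_index_of_normal K₁ K₂) dvd_rfl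
  rw [hn₁, hn₂, ← pow_add] at hdvd
  exact pPow_of_dvd_pPow hp hdvd

lemma pPow_index_finset_inf (hp : p.Prime) {ι : Type*} (s : Finset ι) (f : ι → Subgroup G)
    (hn : ∀ i, (f i).Normal) (hi : ∀ i, ∃ n, (f i).index = p ^ n) :
    (s.inf f).Normal ∧ ∃ n, (s.inf f).index = p ^ n := by
  classical
  induction s using Finset.induction_on with
  | empty =>
    simp only [Finset.inf_empty]
    exact ⟨⟨fun n _ g => Subgroup.mem_top _⟩, 0, by simp [Subgroup.index_top]⟩
  | @insert a s ha ih =>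
    rw [Finset.inf_insert]
    haveI := hn a
    haveI := ih.1
    exact ⟨Subgroup.normal_inf_normal _ _, pPow_index_inf hp (hi a) ih.2⟩

lemma normal_of_le_center {T : Subgroup G} (h : T ≤ Subgroup.center G) : T.Normal := by
  constructor
  intro n hn g
  have hc : g * n = n * g := Subgroup.mem_center_iff.mp (h hn) g
  have : g * n * g⁻¹ = n := by rw [hc]; group
  rw [this]; exact hn

/-- Key lemma: given a subgroup `U` of a central subgroup `C` of `G` with `p`-power index in
`C`, whose image in `G` is `p`-separable, and a normal `p`-power-index subgroup `M` containing
the image of `U`, there is a normal `p`-power-index subgroup `R ≤ M` meeting `C` exactly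
in `U`. -/
lemma key (hp : p.Prime) (C : Subgroup G) (hC : C ≤ Subgroup.center G)
    (U : Subgroup C) (hUidx : ∃ n, U.index = p ^ n)
    (hUsep : PSep p ((U.map C.subtype : Subgroup G) : Set G))
    (M : Subgroup G) (hM : M.Normal) (hMidx : ∃ n, M.index = p ^ n)
    (hUM : U.map C.subtype ≤ M) :
    ∃ R : Subgroup G, R.Normal ∧ (∃ n, R.index = p ^ n) ∧ R ≤ M ∧
      ∀ a : C, ((a : G) ∈ R ↔ a ∈ U) := by
  classical
  haveI : Fact p.Prime := ⟨hp⟩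
  -- the quotient C ⧸ U is finite
  have hfin : Finite (C ⧸ U) := by
    obtain ⟨n, hn⟩ := hUidx
    exact Nat.finite_of_card_ne_zero (by
      rw [show Nat.card (C ⧸ U) = U.index from rfl, hn]
      exact pow_ne_zero n hp.pos.ne')
  haveI := hfin
  haveI := Fintype.ofFinite (C ⧸ U)
  -- for each coset q, a normal p-power index subgroup W q avoiding bad elements
  have claim : ∀ q : C ⧸ U, ∃ W : Subgroup G, W.Normal ∧ (∃ n, W.index = p ^ n) ∧
      ∀ a : C, (QuotientGroup.mk a : C ⧸ U) = q → a ∉ U →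
        (a : G) ∉ ((U.map C.subtype : Subgroup G) : Set G) * (W : Set G) := by
    intro q
    by_cases hq : ∃ a₀ : C, (QuotientGroup.mk a₀ : C ⧸ U) = q ∧ a₀ ∉ U
    · obtain ⟨a₀, ha₀q, ha₀U⟩ := hq
      have ha₀ : (a₀ : G) ∉ (U.map C.subtype : Subgroup G) :=
        fun h => ha₀U ((Subgroup.mem_map_iff_mem C.subtype_injective).mp h)
      obtain ⟨X, _, hXfin, hXp, ψ, hψsurj, hψa₀⟩ := hUsep (a₀ : G) ha₀
      refine ⟨ψ.ker, MonoidHom.normal_ker ψ, ?_, ?_⟩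
      · haveI := hXfin
        obtain ⟨n, hn⟩ := IsPGroup.iff_card.mp hXp
        refine ⟨n, ?_⟩
        rw [Subgroup.index_ker, MonoidHom.range_eq_top_of_surjective ψ hψsurj, ← hn]
        exact Nat.card_congr Subgroup.topEquiv.toEquiv
      · intro a haq haU hmem
        obtain ⟨u, hu, w, hw, huw⟩ := hmem
        -- a₀ = a * (a₀⁻¹ * a)⁻¹ ... rather: u' := a₀⁻¹ * a ∈ U
        have hu' : a₀⁻¹ * a ∈ U := by
          rw [← QuotientGroup.eq]
          exact ha₀q.trans haq.symm
        set u' : C := a₀⁻¹ * a with hu'def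
        have ha₀eq : (a₀ : G) = (a : G) * (u' : G)⁻¹ := by
          have h1 : a₀ = a * u'⁻¹ := by rw [hu'def]; group
          rw [h1]; push_cast; rfl
        apply hψa₀
        have hcoe : ((U.map C.subtype : Subgroup G) : Set G) =
            Subgroup.subtype C '' (U : Set C) := Subgroup.coe_map _ _
        -- ψ a₀ = ψ u * (ψ u')⁻¹ ∈ ψ '' U_H
        have hψa : ψ (a : G) = ψ u := by
          rw [← huw, map_mul, MonoidHom.mem_ker.mp hw, mul_one]
        have hmemU' : ((u' : G)) ∈ (U.map C.subtype : Subgroup G) :=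
          Subgroup.mem_map_of_mem _ hu'
        have himg : ψ '' ((U.map C.subtype : Subgroup G) : Set G) =
            ↑((U.map C.subtype).map ψ) := (Subgroup.coe_map _ _).symm
        rw [himg]
        rw [ha₀eq, map_mul, hψa, map_inv]
        exact mul_mem (Subgroup.mem_map_of_mem _ hu) (inv_mem (Subgroup.mem_map_of_mem _ hmemU'))
    · push_neg at hq
      exact ⟨⊤, ⟨fun n _ g => Subgroup.mem_top _⟩, ⟨0, by simp [Subgroup.index_top]⟩,
        fun a haq haU => absurd haU (not_not.mpr (hq a haq))⟩
  choose W hWnorm hWidx hWprop using claim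
  -- the intersection
  obtain ⟨hWfinNorm, hWfinIdx⟩ :=
    pPow_index_finset_inf hp (Finset.univ : Finset (C ⧸ U)) W hWnorm hWidx
  set WF : Subgroup G := (Finset.univ : Finset (C ⧸ U)).inf W with hWFdef
  haveI := hWfinNorm
  haveI := hM
  set W' : Subgroup G := M ⊓ WF with hW'def
  haveI : W'.Normal := Subgroup.normal_inf_normal M WF
  haveI : (U.map C.subtype).Normal :=
    normal_of_le_center (le_trans (Subgroup.map_subtype_le U) hC)
  refine ⟨U.map C.subtype ⊔ W', Subgroup.sup_normal _ _, ?_, ?_, ?_⟩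
  · exact pPow_index_of_le hp le_sup_right (pPow_index_inf hp hMidx hWfinIdx)
  · exact sup_le hUM inf_le_left
  · intro a
    constructor
    · intro haR
      by_contra haU
      have hset : ((U.map C.subtype ⊔ W' : Subgroup G) : Set G) =
          ((U.map C.subtype : Subgroup G) : Set G) * (W' : Set G) :=
        Subgroup.mul_normal _ _
      have haset : (a : G) ∈ ((U.map C.subtype : Subgroup G) : Set G) * (W' : Set G) := by
        rw [← hset]; exact haR
      have hsub : (W' : Set G) ⊆ (W (QuotientGroup.mk a) : Set G) := by
        intro x hx
        exact (le_trans (inf_le_right : W' ≤ WF)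
          (Finset.inf_le (Finset.mem_univ (QuotientGroup.mk a)))) hx
      have : (a : G) ∈ ((U.map C.subtype : Subgroup G) : Set G) *
          ((W (QuotientGroup.mk a)) : Set G) :=
        Set.mul_subset_mul_left hsub haset
      exact hWprop (QuotientGroup.mk a) a rfl haU this
    · intro haU
      exact Subgroup.mem_sup_left (Subgroup.mem_map_of_mem _ haU)

end Aux

/-- Proposition 3.2: under the separability hypotheses on the central subgroups `A`, `B`,
any pair of finite `p`-power-index normal subgroups `M ⊴ H`, `N ⊴ K` contains a pair of
`(A,B,φ)`-compatible finite `p`-power-index normal subgroups. -/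
theorem exists_compatible_normal_pPow_index (p : ℕ) (hp : p.Prime)
    {H K : Type} [Group H] [Group K]
    (A : Subgroup H) (B : Subgroup K) (φ : A ≃* B)
    (hA : A ≤ Subgroup.center H) (hB : B ≤ Subgroup.center K)
    (hAsep : PSep p (A : Set H)) (hBsep : PSep p (B : Set K))
    (hAsub : ∀ U : Subgroup A, (∃ n : ℕ, U.index = p ^ n) →
      PSep p ((U.map A.subtype : Subgroup H) : Set H))
    (hBsub : ∀ V : Subgroup B, (∃ n : ℕ, V.index = p ^ n) →
      PSep p ((V.map B.subtype : Subgroup K) : Set K)) :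
    ∀ (M : Subgroup H) (N : Subgroup K), M.Normal → N.Normal →
      (∃ n : ℕ, M.index = p ^ n) → (∃ n : ℕ, N.index = p ^ n) →
      ∃ (R : Subgroup H) (S : Subgroup K), R.Normal ∧ S.Normal ∧
        (∃ n : ℕ, R.index = p ^ n) ∧ (∃ n : ℕ, S.index = p ^ n) ∧
        R ≤ M ∧ S ≤ N ∧ Compatible A B φ R S := by
  intro M N hM hN hMidx hNidx
  haveI := hM; haveI := hN
  -- A and B are commutative
  haveI : CommGroup A :=
    { (inferInstance : Group A) with
      mul_comm := fun a b => Subtype.ext (Subgroup.mem_center_iff.mp (hA b.2) (a : H)) }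
  haveI : CommGroup B :=
    { (inferInstance : Group B) with
      mul_comm := fun a b => Subtype.ext (Subgroup.mem_center_iff.mp (hB b.2) (a : K)) }
  -- U = (A ∩ M) ∩ φ⁻¹(B ∩ N)
  set U : Subgroup A := M.comap A.subtype ⊓ (N.comap B.subtype).comap φ.toMonoidHom with hUdef
  have hMA : ∃ n, (M.comap A.subtype).index = p ^ n := by
    obtain ⟨n, hn⟩ := hMidx
    refine pPow_of_dvd_pPow hp (a := (M.comap A.subtype).index) (n := n) ?_
    rw [Subgroup.index_comap, ← hn]
    exact Subgroup.relIndex_dvd_index_of_normal M _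
  have hNB : ∃ n, (N.comap B.subtype).index = p ^ n := by
    obtain ⟨n, hn⟩ := hNidx
    refine pPow_of_dvd_pPow hp (a := (N.comap B.subtype).index) (n := n) ?_
    rw [Subgroup.index_comap, ← hn]
    exact Subgroup.relIndex_dvd_index_of_normal N _
  have hNBφ : ∃ n, ((N.comap B.subtype).comap φ.toMonoidHom).index = p ^ n := by
    obtain ⟨n, hn⟩ := hNB
    refine ⟨n, ?_⟩
    rw [Subgroup.index_comap, MonoidHom.range_eq_top_of_surjective _ φ.surjective,
      Subgroup.relIndex_top_right, hn]
  have hUidx : ∃ n, U.index = p ^ n := pPow_index_inf hp hMA hNBφ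
  -- V = φ(U)
  set V : Subgroup B := U.map φ.toMonoidHom with hVdef
  have hVidx : ∃ n, V.index = p ^ n := by
    obtain ⟨n, hn⟩ := hUidx
    refine ⟨n, ?_⟩
    rw [hVdef, Subgroup.map_equiv_eq_comap_symm', Subgroup.index_comap,
      MonoidHom.range_eq_top_of_surjective _ φ.symm.surjective,
      Subgroup.relIndex_top_right, hn]
  -- apply the key lemma on both sides
  obtain ⟨R, hRnorm, hRidx, hRM, hRa⟩ :=
    key hp A hA U hUidx (hAsub U hUidx) M hM hMidx
      (Subgroup.map_le_iff_le_comap.mpr (le_trans inf_le_left le_rfl))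
  obtain ⟨S, hSnorm, hSidx, hSN, hSb⟩ :=
    key hp B hB V hVidx (hBsub V hVidx) N hN hNidx
      (Subgroup.map_le_iff_le_comap.mpr
        (Subgroup.map_le_iff_le_comap.mpr inf_le_right))
  refine ⟨R, S, hRnorm, hSnorm, hRidx, hSidx, hRM, hSN, ?_⟩
  -- compatibility
  unfold Compatible
  ext k
  simp only [Set.mem_image, Set.mem_setOf_eq, SetLike.mem_coe, Subgroup.mem_inf]
  constructor
  · rintro ⟨a, haR, rfl⟩
    have haU : a ∈ U := (hRa a).mp haR
    refine ⟨(φ a).2, ?_⟩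
    exact (hSb (φ a)).mpr (Subgroup.mem_map_of_mem _ haU)
  · rintro ⟨hkB, hkS⟩
    have hbV : (⟨k, hkB⟩ : B) ∈ V := (hSb ⟨k, hkB⟩).mp hkS
    obtain ⟨a, haU, hab⟩ := hbV
    exact ⟨a, (hRa a).mpr haU, congrArg Subtype.val hab⟩
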